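/- If G is a graph with minimum degree δ(G) ≥ 1, then Z(G) ≥ δ(G). -/
import Mathlib


open scoped Classical

variable {V : Type*}

/-- `Z` is a zero forcing set of `G`: the vertices outside `Z` can be listed `u 0, …, u (k-1)`
so that each `u i` is the unique neighbor of some vertex `v i` of `Z ∪ {u j : j < i}`
outside `Z ∪ {u j : j < i}`. -/
def IsZeroForcingSet [Fintype V] (G : SimpleGraph V) (Z : Finset V) : Prop :=
  ∃ (k : ℕ) (u : Fin k → V) (v : Fin k → V),
    Function.Injective u ∧ (∀ w, w ∉ Z ↔ ∃ i, u i = w) ∧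
    ∀ i : Fin k,
      (v i ∈ Z ∨ ∃ j : Fin k, j < i ∧ u j = v i) ∧
      G.Adj (v i) (u i) ∧
      ∀ w, G.Adj (v i) w → w ∉ Z → (∀ j : Fin k, j < i → u j ≠ w) → w = u i

/-- The zero forcing number of `G`: minimum size of a zero forcing set. -/
noncomputable def zeroForcingNumber [Fintype V] (G : SimpleGraph V) : ℕ :=
  sInf {n | ∃ Z : Finset V, IsZeroForcingSet G Z ∧ Z.card = n}


/-- If `G` has minimum degree at least 1, then `Z(G) ≥ δ(G)`. -/
theorem stmt_3 [Fintype V] (G : SimpleGraph V) [DecidableRel G.Adj]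
    (h : 1 ≤ G.minDegree) :
    G.minDegree ≤ zeroForcingNumber G := by
  have hne : Nonempty V := by
    by_contra hV
    simp only [not_nonempty_iff] at hV
    have : G.minDegree = 0 := by
      simp [SimpleGraph.minDegree, Finset.univ_eq_empty]
    omega
  have hS : {n | ∃ Z : Finset V, IsZeroForcingSet G Z ∧ Z.card = n}.Nonempty := by
    refine ⟨(Finset.univ : Finset V).card, Finset.univ, ⟨0, Fin.elim0, Fin.elim0, ?_⟩, rfl⟩
    refine ⟨fun i => i.elim0, fun w => ?_, fun i => i.elim0⟩
    simp
  refine le_csInf hS ?_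
  rintro n ⟨Z, ⟨k, u, v, hu, hZ, hforce⟩, rfl⟩
  rcases Nat.eq_zero_or_pos k with hk | hk
  · -- Z = univ
    have hZuniv : Z = Finset.univ := by
      ext w
      simp only [Finset.mem_univ, iff_true]
      by_contra hw
      obtain ⟨i, _⟩ := (hZ w).1 hw
      exact absurd i.2 (by omega)
    obtain ⟨x, hx⟩ := G.exists_minimal_degree_vertex
    rw [hZuniv, hx]
    calc G.degree x ≤ Fintype.card V - 1 := by
          have := G.degree_lt_card_verts x; omega
      _ ≤ Finset.univ.card := by simp [Finset.card_univ]
  · set i0 : Fin k := ⟨0, hk⟩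
    obtain ⟨hv0, hadj0, hforce0⟩ := hforce i0
    have hv0Z : v i0 ∈ Z := by
      rcases hv0 with hv0 | ⟨j, hj, _⟩
      · exact hv0
      · exact absurd hj (by simp [i0, Fin.lt_def])
    -- every neighbor of v i0 other than u i0 is in Z
    have hnb : ∀ w, G.Adj (v i0) w → w ≠ u i0 → w ∈ Z := by
      intro w hw hwu
      by_contra hwZ
      exact hwu (hforce0 w hw hwZ (fun j hj => absurd hj (by simp [i0, Fin.lt_def])))
    have hsub : insert (v i0) ((G.neighborFinset (v i0)).erase (u i0)) ⊆ Z := by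
      intro w hw
      rcases Finset.mem_insert.mp hw with rfl | hw
      · exact hv0Z
      · obtain ⟨hwu, hwn⟩ := Finset.mem_erase.mp hw
        exact hnb w (by simpa using hwn) hwu
    have hcard : G.degree (v i0) ≤ Z.card := by
      have h1 : (insert (v i0) ((G.neighborFinset (v i0)).erase (u i0))).card
          = ((G.neighborFinset (v i0)).erase (u i0)).card + 1 := by
        rw [Finset.card_insert_of_notMem]
        simp [G.mem_neighborFinset]
      have h2 : ((G.neighborFinset (v i0)).erase (u i0)).card
          = G.degree (v i0) - 1 := by
        rw [Finset.card_erase_of_mem (by simpa using hadj0)]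
        rfl
      have h3 := Finset.card_le_card hsub
      have hd : 1 ≤ G.degree (v i0) :=
        le_trans h (G.minDegree_le_degree _)
      omega
    exact le_trans (G.minDegree_le_degree _) hcard
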